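/- Let H : ℝⁿ → Set ℝⁿ be a set-valued map, let c_b > 0 and ξ > 0, and let (x_k)_{k∈ℕ} ⊂ ℝⁿ, (α_k)_{k∈ℕ} ⊂ (0,∞), (e_k)_{k∈ℕ} ⊂ ℝⁿ, (u_k)_{k∈ℕ} ⊂ ℝⁿ satisfy u_k ∈ co H(B(x_k, c_b α_k^{ξ})) and x_{k+1} = x_k − α_k u_k + e_k for all k. Assume: (i) α_k → 0 and Σ_{k=0}^∞ α_k = ∞; (ii) Σ_{k=0}^∞ |e_k| < ∞; (iii) x_k → x*; (iv) H is outer semicontinuous at x* (whenever z_j → x*, h_j ∈ H(z_j), and h_j → h, one has h ∈ H(x*)); (v) H is locally bounded at x* (there exist r > 0 and M > 0 such that |h| ≤ M for every z ∈ B(x*, r) and h ∈ H(z)); and (vi) H(x*) is convex. Then 0 ∈ H(x*). -/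

import Mathlib

open Filter

/-- If a bounded realization of the inexact subgradient-type method
with Goldstein enlargement converges to `x*`, where `H` is outer semicontinuous, locally
bounded, and convex-valued at `x*`, then `0 ∈ H(x*)`. -/
theorem inexact_limit_is_critical {n : ℕ}
    (H : EuclideanSpace ℝ (Fin n) → Set (EuclideanSpace ℝ (Fin n)))
    (c_b ξ : ℝ) (hcb : 0 < c_b) (hξ : 0 < ξ)
    (x u e : ℕ → EuclideanSpace ℝ (Fin n)) (α : ℕ → ℝ)
    (hαpos : ∀ k, 0 < α k)
    (hu : ∀ k, u k ∈ convexHull ℝ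
      (⋃ z ∈ Metric.closedBall (x k) (c_b * α k ^ ξ), H z))
    (hrec : ∀ k, x (k + 1) = x k - α k • u k + e k)
    (hα0 : Tendsto α atTop (nhds 0))
    (hdiv : Tendsto (fun N => ∑ k ∈ Finset.range N, α k) atTop atTop)
    (he : Summable fun k => ‖e k‖)
    (xstar : EuclideanSpace ℝ (Fin n)) (hxlim : Tendsto x atTop (nhds xstar))
    (hosc : ∀ (z h : ℕ → EuclideanSpace ℝ (Fin n)) (hl : EuclideanSpace ℝ (Fin n)),
      Tendsto z atTop (nhds xstar) → (∀ j, h j ∈ H (z j)) → Tendsto h atTop (nhds hl) →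
      hl ∈ H xstar)
    (hlb : ∃ r > (0 : ℝ), ∃ M > (0 : ℝ), ∀ z ∈ Metric.closedBall xstar r, ∀ h ∈ H z,
      ‖h‖ ≤ M)
    (hconv : Convex ℝ (H xstar)) :
    (0 : EuclideanSpace ℝ (Fin n)) ∈ H xstar := by
  by_contra h0
  obtain ⟨r, hr, M, hM, hbd⟩ := hlb
  -- `H xstar` is closed (outer semicontinuity with constant base sequence)
  have hclosed : IsClosed (H xstar) := by
    apply IsSeqClosed.isClosed
    intro h hl hmem hlim
    exact hosc (fun _ => xstar) h hl tendsto_const_nhds hmem hlim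
  -- separate 0 from `H xstar`
  obtain ⟨f, u₀, hf0, hfsep⟩ := geometric_hahn_banach_point_closed hconv hclosed h0
  have hu₀ : 0 < u₀ := by simpa using hf0
  set ρ : ℕ → ℝ := fun k => c_b * α k ^ ξ with hρdef
  have hρ0 : Tendsto ρ atTop (nhds 0) := by
    have h1 : Tendsto (fun k => α k ^ ξ) atTop (nhds 0) := by
      have := (Real.continuousAt_rpow_const 0 ξ (Or.inr hξ.le)).tendsto.comp hα0
      simpa [Real.zero_rpow hξ.ne', Function.comp_def] using this
    have := h1.const_mul c_b
    simpa using this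
  have hxdist : Tendsto (fun k => dist (x k) xstar) atTop (nhds 0) :=
    tendsto_iff_dist_tendsto_zero.mp hxlim
  -- the small balls are eventually inside `B(xstar, r)`
  have hincl : ∀ᶠ k in atTop,
      Metric.closedBall (x k) (ρ k) ⊆ Metric.closedBall xstar r := by
    have h1 : ∀ᶠ k in atTop, dist (x k) xstar < r / 2 :=
      hxdist.eventually (eventually_lt_nhds (by linarith))
    have h2 : ∀ᶠ k in atTop, ρ k < r / 2 :=
      hρ0.eventually (eventually_lt_nhds (by linarith))
    filter_upwards [h1, h2] with k hk1 hk2 z hz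
    have hz' := Metric.mem_closedBall.mp hz
    have : dist z xstar ≤ dist z (x k) + dist (x k) xstar := dist_triangle _ _ _
    exact Metric.mem_closedBall.mpr (by linarith)
  -- Claim A : eventually `f ≥ u₀` on `H` of the small ball
  have claimA : ∀ᶠ k in atTop,
      ∀ z ∈ Metric.closedBall (x k) (ρ k), ∀ h ∈ H z, u₀ ≤ f h := by
    by_contra hc
    rw [Filter.not_eventually] at hc
    have hfreq := hc.and_eventually hincl
    obtain ⟨φ, hφ, hP⟩ := Filter.extraction_of_frequently_atTop hfreq
    have hPj : ∀ j, ∃ z, z ∈ Metric.closedBall (x (φ j)) (ρ (φ j)) ∧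
        ∃ h, h ∈ H z ∧ f h < u₀ := by
      intro j
      have := (hP j).1
      push_neg at this
      exact this
    choose z hz h hh hfh using hPj
    have hhb : ∀ j, h j ∈ Metric.closedBall (0 : EuclideanSpace ℝ (Fin n)) M := by
      intro j
      rw [Metric.mem_closedBall, dist_zero_right]
      exact hbd (z j) ((hP j).2 (hz j)) (h j) (hh j)
    obtain ⟨a, -, ψ, hψ, hconv'⟩ :=
      tendsto_subseq_of_bounded (Metric.isBounded_closedBall
        (x := (0 : EuclideanSpace ℝ (Fin n))) (r := M)) hhb
    -- z ∘ ψ tends to xstar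
    have hz0 : Tendsto (fun j => dist (z j) xstar) atTop (nhds 0) := by
      have hb : ∀ j, dist (z j) xstar ≤ ρ (φ j) + dist (x (φ j)) xstar := by
        intro j
        have h1 := Metric.mem_closedBall.mp (hz j)
        have := dist_triangle (z j) (x (φ j)) xstar
        linarith
      have hlim2 : Tendsto (fun j => ρ (φ j) + dist (x (φ j)) xstar) atTop (nhds 0) := by
        have := (hρ0.comp hφ.tendsto_atTop).add (hxdist.comp hφ.tendsto_atTop)
        simpa using this
      exact squeeze_zero (fun j => dist_nonneg) hb hlim2
    have hztend : Tendsto (z ∘ ψ) atTop (nhds xstar) := by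
      rw [tendsto_iff_dist_tendsto_zero]
      exact hz0.comp hψ.tendsto_atTop
    have ha : a ∈ H xstar :=
      hosc (z ∘ ψ) (h ∘ ψ) a hztend (fun j => hh (ψ j)) hconv'
    have hfa : f a ≤ u₀ := by
      have : Tendsto (fun j => f (h (ψ j))) atTop (nhds (f a)) :=
        (f.continuous.tendsto a).comp hconv'
      exact le_of_tendsto this (Eventually.of_forall fun j => (hfh (ψ j)).le)
    exact absurd (hfsep a ha) (not_lt.mpr hfa)
  -- hence eventually `u₀ ≤ f (u k)`
  have hfu : ∀ᶠ k in atTop, u₀ ≤ f (u k) := by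
    filter_upwards [claimA] with k hk
    have hsub : (⋃ z ∈ Metric.closedBall (x k) (ρ k), H z) ⊆ {w | u₀ ≤ f w} := by
      intro w hw
      simp only [Set.mem_iUnion, exists_prop] at hw
      obtain ⟨zz, hzz, hw⟩ := hw
      exact hk zz hzz w hw
    have hcvx : Convex ℝ {w : EuclideanSpace ℝ (Fin n) | u₀ ≤ f w} :=
      convex_halfSpace_ge ⟨map_add f, map_smul f⟩ u₀
    exact convexHull_min hsub hcvx (hu k)
  rw [eventually_atTop] at hfu
  obtain ⟨K, hK⟩ := hfu
  set T : ℝ := ‖f‖ * ∑' k, ‖e k‖ with hTdef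
  -- key telescoping estimate
  have key : ∀ N, f (x (K + N)) + u₀ * ∑ k ∈ Finset.Ico K (K + N), α k ≤
      f (x K) + ∑ k ∈ Finset.Ico K (K + N), ‖f‖ * ‖e k‖ := by
    intro N
    induction N with
    | zero => simp
    | succ N ih =>
      have hrecf : f (x (K + N + 1)) =
          f (x (K + N)) - α (K + N) * f (u (K + N)) + f (e (K + N)) := by
        rw [hrec (K + N)]
        simp [map_add, map_sub, map_smul]
      have h1 : u₀ ≤ f (u (K + N)) := hK _ (Nat.le_add_right K N)
      have h2 : f (e (K + N)) ≤ ‖f‖ * ‖e (K + N)‖ := by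
        have := f.le_opNorm (e (K + N))
        have h3 : f (e (K + N)) ≤ ‖f (e (K + N))‖ := le_abs_self _
        linarith
      have h4 : α (K + N) * u₀ ≤ α (K + N) * f (u (K + N)) :=
        mul_le_mul_of_nonneg_left h1 (hαpos (K + N)).le
      have e1 : K + (N + 1) = (K + N) + 1 := rfl
      rw [e1, Finset.sum_Ico_succ_top (Nat.le_add_right K N),
        Finset.sum_Ico_succ_top (Nat.le_add_right K N)]
      nlinarith [ih]
  have hT : ∀ N, ∑ k ∈ Finset.Ico K (K + N), ‖f‖ * ‖e k‖ ≤ T := by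
    intro N
    rw [hTdef, ← Finset.mul_sum]
    have h5 := Summable.sum_le_tsum (Finset.Ico K (K + N)) (fun i _ => norm_nonneg (e i)) he
    exact mul_le_mul_of_nonneg_left h5 (norm_nonneg f)
  -- the partial sums of α over [K, K+N) diverge
  have hS : Tendsto (fun N => ∑ k ∈ Finset.Ico K (K + N), α k) atTop atTop := by
    have h1 : Tendsto (fun N => K + N) atTop atTop :=
      tendsto_atTop_mono (fun m => Nat.le_add_left m K) tendsto_id
    have h2 := tendsto_atTop_add_const_right atTop
      (-(∑ k ∈ Finset.range K, α k)) (hdiv.comp h1)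
    refine h2.congr fun N => ?_
    show (∑ k ∈ Finset.range (K + N), α k) + -(∑ k ∈ Finset.range K, α k) = _
    rw [Finset.sum_Ico_eq_sub α (Nat.le_add_right K N)]
    ring
  -- contradiction with convergence of `x`
  have hfx : Tendsto (fun N => f (x (K + N))) atTop (nhds (f xstar)) := by
    have h1 : Tendsto (fun N => K + N) atTop atTop :=
      tendsto_atTop_mono (fun m => Nat.le_add_left m K) tendsto_id
    exact (f.continuous.tendsto xstar).comp (hxlim.comp h1)
  have h1 : ∀ᶠ N in atTop, f xstar - 1 < f (x (K + N)) :=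
    hfx.eventually (eventually_gt_nhds (by linarith))
  have h2 : ∀ᶠ N in atTop,
      (f (x K) + T - (f xstar - 1)) / u₀ < ∑ k ∈ Finset.Ico K (K + N), α k :=
    hS.eventually_gt_atTop _
  obtain ⟨N, hN1, hN2⟩ := (h1.and h2).exists
  have hk1 := key N
  have hk2 := hT N
  have h3 : u₀ * ((f (x K) + T - (f xstar - 1)) / u₀) <
      u₀ * ∑ k ∈ Finset.Ico K (K + N), α k := mul_lt_mul_of_pos_left hN2 hu₀
  rw [mul_div_cancel₀ _ hu₀.ne'] at h3
  linarith
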